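/- If D_1,...,D_n are i.i.d. with density f(r) = (L_0 + 2 pi r)/(L_0 R + pi R^2) on [0,R], then the moment estimator tilde L_0 = (2 pi R/3)(2R - 3 bar D)/(2 bar D - R) satisfies E|tilde L_0| = infinity. -/

import Mathlib

open Real MeasureTheory Set ProbabilityTheory
open scoped ENNReal

lemma lint_inv_top {ε K : ℝ} (hε : 0 < ε) (hK : 0 < K) :
    ∫⁻ x in Ioo (0:ℝ) ε, ENNReal.ofReal (K / x) = ⊤ := by
  by_contra h
  have hlt : ∫⁻ x in Ioo (0:ℝ) ε, ENNReal.ofReal (K / x) < ⊤ := lt_top_iff_ne_top.2 h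
  have hmeas : Measurable fun x : ℝ => K / x := measurable_const.div measurable_id
  have hae : 0 ≤ᵐ[volume.restrict (Ioo (0:ℝ) ε)] fun x => K / x := by
    filter_upwards [ae_restrict_mem measurableSet_Ioo] with x hx
    exact div_nonneg hK.le (le_of_lt hx.1)
  have hint : IntegrableOn (fun x => K / x) (Ioo (0:ℝ) ε) := by
    refine ⟨hmeas.aestronglyMeasurable, ?_⟩
    rw [hasFiniteIntegral_iff_ofReal hae]
    exact hlt
  have hinv : IntegrableOn (fun x : ℝ => x ^ (-1 : ℝ)) (Ioo (0:ℝ) ε) := by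
    have h2 : IntegrableOn (fun x : ℝ => K⁻¹ * (K / x)) (Ioo (0:ℝ) ε) := by
      exact hint.const_mul K⁻¹
    refine h2.congr_fun (fun x hx => ?_) measurableSet_Ioo
    rw [Real.rpow_neg_one]
    field_simp
  rw [intervalIntegral.integrableOn_Ioo_rpow_iff hε] at hinv
  linarith

lemma lint_inv_top' {c ε K : ℝ} (hε : 0 < ε) (hK : 0 < K) :
    ∫⁻ x in Ioo c (c + ε), ENNReal.ofReal (K / (x - c)) = ⊤ := by
  have key : ∀ x : ℝ, (Ioo c (c+ε)).indicator (fun x => ENNReal.ofReal (K / (x - c))) x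
      = (Ioo (0:ℝ) ε).indicator (fun y => ENNReal.ofReal (K / y)) (x - c) := by
    intro x
    by_cases hx : x ∈ Ioo c (c+ε)
    · rw [indicator_of_mem hx, indicator_of_mem (by constructor <;> [linarith [hx.1]; linarith [hx.2]])]
    · rw [indicator_of_notMem hx, indicator_of_notMem (by
        intro hmem; exact hx ⟨by linarith [hmem.1], by linarith [hmem.2]⟩)]
  have hm : Measurable fun y : ℝ => ENNReal.ofReal (K / y) :=
    (measurable_const.div measurable_id).ennreal_ofReal
  calc ∫⁻ x in Ioo c (c + ε), ENNReal.ofReal (K / (x - c))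
      = ∫⁻ x, (Ioo c (c+ε)).indicator (fun x => ENNReal.ofReal (K / (x - c))) x := by
        rw [lintegral_indicator measurableSet_Ioo _]
    _ = ∫⁻ x, (Ioo (0:ℝ) ε).indicator (fun y => ENNReal.ofReal (K / y)) (x + -c) := by
        simp_rw [key, sub_eq_add_neg]
    _ = ∫⁻ y, (Ioo (0:ℝ) ε).indicator (fun y => ENNReal.ofReal (K / y)) y :=
        lintegral_add_right_eq_self _ (-c)
    _ = ∫⁻ y in Ioo (0:ℝ) ε, ENNReal.ofReal (K / y) := by
        rw [lintegral_indicator measurableSet_Ioo _]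
    _ = ⊤ := lint_inv_top hε hK


lemma pointwise_bound {R L0 : ℝ} (hR : 0 < R) (hL0 : 0 < L0) {n : ℕ} (hn : 1 ≤ n) {s' c x : ℝ}
    (hc : c = n * R / 2 - s') (hs1 : R / 4 ≤ c) (hs2 : c ≤ 3 * R / 4)
    (hx1 : c < x) (hx2 : x < c + min (R / 4) (n * R / 12)) :
    ENNReal.ofReal (L0 / (L0 * R + π * R ^ 2) * (π * R ^ 2 * n / 12) / (x - c))
      ≤ ENNReal.ofReal ((Icc (0:ℝ) R).indicator
        (fun t => (L0 + 2 * π * t) / (L0 * R + π * R ^ 2)) x) *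
      ENNReal.ofReal |2 * π * R / 3 * ((2 * R - 3 * ((s' + x) / n)) / (2 * ((s' + x) / n) - R))| := by
  have hπ := Real.pi_pos
  have hn' : (0:ℝ) < n := by exact_mod_cast hn
  have hA : 0 < L0 * R + π * R ^ 2 := by positivity
  obtain ⟨u, hueq⟩ : ∃ u : ℝ, u = x - c := ⟨_, rfl⟩
  have hεa : min (R / 4) (n * R / 12) ≤ R / 4 := min_le_left _ _
  have hεb : min (R / 4) (n * R / 12) ≤ n * R / 12 := min_le_right _ _
  have hu1 : 0 < u := by rw [hueq]; linarith
  have hu2 : u < min (R / 4) (n * R / 12) := by rw [hueq]; linarith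
  have hxpos : 0 < x := by linarith
  have hxle : x ≤ R := by linarith
  rw [Set.indicator_of_mem (show x ∈ Icc (0:ℝ) R from ⟨hxpos.le, hxle⟩)]
  have hsx : (s' + x) / n = R / 2 + u / n := by
    rw [hueq, hc]; field_simp; ring
  have hden : 2 * ((s' + x) / n) - R = 2 * u / n := by rw [hsx]; ring
  have hnum : 2 * R - 3 * ((s' + x) / n) = R / 2 - 3 * u / n := by rw [hsx]; ring
  have hnumlb : R / 4 ≤ R / 2 - 3 * u / n := by
    have huR : u / n ≤ R / 12 := by
      rw [div_le_iff₀ hn']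
      have : u ≤ n * R / 12 := le_of_lt (lt_of_lt_of_le hu2 hεb)
      linarith [this]
    linarith
  have habs : |2 * π * R / 3 * ((2 * R - 3 * ((s' + x) / n)) / (2 * ((s' + x) / n) - R))|
      = 2 * π * R / 3 * ((R / 2 - 3 * u / n) / (2 * u / n)) := by
    rw [hden, hnum, abs_of_nonneg]
    apply mul_nonneg (by positivity)
    apply div_nonneg (by linarith) (by positivity)
  rw [habs]
  have hxc : x - c = u := hueq.symm
  rw [hxc]
  have hineq : L0 / (L0 * R + π * R ^ 2) * (π * R ^ 2 * n / 12) / u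
      ≤ (L0 + 2 * π * x) / (L0 * R + π * R ^ 2)
        * (2 * π * R / 3 * ((R / 2 - 3 * u / n) / (2 * u / n))) := by
    have e1 : 2 * π * R / 3 * ((R / 2 - 3 * u / n) / (2 * u / n))
        = π * R * n * (R / 2 - 3 * u / n) / 3 / u := by
      field_simp
    rw [e1]
    have e2 : (L0 + 2 * π * x) / (L0 * R + π * R ^ 2)
        * (π * R * n * (R / 2 - 3 * u / n) / 3 / u)
        = ((L0 + 2 * π * x) / (L0 * R + π * R ^ 2)
          * (π * R * n * (R / 2 - 3 * u / n) / 3)) / u := by ring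
    rw [e2, div_le_div_iff_of_pos_right hu1]
    have h1 : L0 / (L0 * R + π * R ^ 2) ≤ (L0 + 2 * π * x) / (L0 * R + π * R ^ 2) := by
      gcongr
      nlinarith
    have h2 : π * R ^ 2 * (n:ℝ) / 12 ≤ π * R * n * (R / 2 - 3 * u / n) / 3 := by
      nlinarith [mul_le_mul_of_nonneg_left hnumlb (show (0:ℝ) ≤ π * R * n / 3 by positivity)]
    exact mul_le_mul h1 h2 (by positivity) (by positivity)
  calc ENNReal.ofReal (L0 / (L0 * R + π * R ^ 2) * (π * R ^ 2 * n / 12) / u)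
      ≤ ENNReal.ofReal ((L0 + 2 * π * x) / (L0 * R + π * R ^ 2)
        * (2 * π * R / 3 * ((R / 2 - 3 * u / n) / (2 * u / n)))) :=
        ENNReal.ofReal_le_ofReal hineq
    _ = ENNReal.ofReal ((L0 + 2 * π * x) / (L0 * R + π * R ^ 2))
        * ENNReal.ofReal (2 * π * R / 3 * ((R / 2 - 3 * u / n) / (2 * u / n))) :=
        ENNReal.ofReal_mul (by positivity)

lemma inner_top {R L0 : ℝ} (hR : 0 < R) (hL0 : 0 < L0) {n : ℕ} (hn : 1 ≤ n) {s' : ℝ}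
    (hs1 : R / 4 ≤ n * R / 2 - s') (hs2 : n * R / 2 - s' ≤ 3 * R / 4) :
    ∫⁻ x, ENNReal.ofReal ((Icc (0:ℝ) R).indicator
        (fun t => (L0 + 2 * π * t) / (L0 * R + π * R ^ 2)) x) *
      ENNReal.ofReal |2 * π * R / 3 * ((2 * R - 3 * ((s' + x) / n)) / (2 * ((s' + x) / n) - R))|
      = ⊤ := by
  have hπ := Real.pi_pos
  have hn' : (0:ℝ) < n := by exact_mod_cast hn
  have hA : 0 < L0 * R + π * R ^ 2 := by positivity
  have hε : 0 < min (R / 4) ((n:ℝ) * R / 12) := lt_min (by positivity) (by positivity)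
  have hK : 0 < L0 / (L0 * R + π * R ^ 2) * (π * R ^ 2 * n / 12) := by positivity
  have hmeasbig : Measurable fun x : ℝ => ENNReal.ofReal ((Icc (0:ℝ) R).indicator
        (fun t => (L0 + 2 * π * t) / (L0 * R + π * R ^ 2)) x) *
      ENNReal.ofReal |2 * π * R / 3 * ((2 * R - 3 * ((s' + x) / n)) / (2 * ((s' + x) / n) - R))| := by
    apply Measurable.fun_mul
    · exact (Measurable.indicator (by fun_prop) measurableSet_Icc).ennreal_ofReal
    · apply Measurable.ennreal_ofReal
      apply Measurable.abs
      exact measurable_const.mul ((measurable_const.sub (by fun_prop)).div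
        ((by fun_prop : Measurable fun x : ℝ => 2 * ((s' + x) / n)).sub measurable_const))
  refine top_le_iff.mp ?_
  calc (⊤:ℝ≥0∞) = ∫⁻ x in Ioo (n * R / 2 - s') (n * R / 2 - s' + min (R / 4) ((n:ℝ) * R / 12)),
        ENNReal.ofReal (L0 / (L0 * R + π * R ^ 2) * (π * R ^ 2 * n / 12) / (x - (n * R / 2 - s'))) :=
        (lint_inv_top' hε hK).symm
    _ ≤ ∫⁻ x in Ioo (n * R / 2 - s') (n * R / 2 - s' + min (R / 4) ((n:ℝ) * R / 12)),
        ENNReal.ofReal ((Icc (0:ℝ) R).indicator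
          (fun t => (L0 + 2 * π * t) / (L0 * R + π * R ^ 2)) x) *
        ENNReal.ofReal |2 * π * R / 3 * ((2 * R - 3 * ((s' + x) / n)) / (2 * ((s' + x) / n) - R))| := by
        apply setLIntegral_mono hmeasbig
        intro x hx
        exact pointwise_bound hR hL0 hn rfl hs1 hs2 hx.1 hx.2
    _ ≤ _ := setLIntegral_le_lintegral _ _


/-- If D₁,…,Dₙ are i.i.d. with density (L₀+2πr)/(L₀R+πR²) on [0,R], then the moment
estimator L̃₀ = (2πR/3)(2R - 3D̄)/(2D̄ - R) satisfies E|L̃₀| = ∞. -/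
theorem stmt_15 {Ω : Type*} [MeasurableSpace Ω] (P : Measure Ω) [IsProbabilityMeasure P]
    (n : ℕ) (hn : 1 ≤ n) (R L0 : ℝ) (hR : 0 < R) (hL0 : 0 < L0)
    (D : Fin n → Ω → ℝ) (hmeas : ∀ i, Measurable (D i))
    (hindep : iIndepFun D P)
    (hlaw : ∀ i, Measure.map (D i) P = volume.withDensity fun r =>
      ENNReal.ofReal ((Icc (0:ℝ) R).indicator
        (fun t => (L0 + 2 * π * t) / (L0 * R + π * R ^ 2)) r))
    (barD : Ω → ℝ) (hbarD : ∀ ω, barD ω = (∑ i, D i ω) / n)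
    (tildeL0 : Ω → ℝ)
    (htilde : ∀ ω, tildeL0 ω
      = (2 * π * R / 3) * ((2 * R - 3 * barD ω) / (2 * barD ω - R))) :
    ∫⁻ ω, ENNReal.ofReal |tildeL0 ω| ∂P = ⊤ := by
  classical
  have hπ := Real.pi_pos
  have hn' : (0:ℝ) < n := by exact_mod_cast hn
  have hn1 : (1:ℝ) ≤ n := by exact_mod_cast hn
  have hA : 0 < L0 * R + π * R ^ 2 := by positivity
  set fd : ℝ → ℝ≥0∞ := fun r => ENNReal.ofReal ((Icc (0:ℝ) R).indicator
    (fun t => (L0 + 2 * π * t) / (L0 * R + π * R ^ 2)) r) with hfd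
  have hfdmeas : Measurable fd :=
    (Measurable.indicator (by fun_prop) measurableSet_Icc).ennreal_ofReal
  set i0 : Fin n := ⟨0, hn⟩ with hi0
  set t : Finset (Fin n) := Finset.univ.erase i0 with ht
  set S : Ω → ℝ := fun ω => ∑ j ∈ t, D j ω with hS
  have hSmeas : Measurable S := Finset.measurable_sum t fun j _ => hmeas j
  set F : ℝ × ℝ → ℝ≥0∞ := fun p => ENNReal.ofReal
    |2 * π * R / 3 * ((2 * R - 3 * ((p.1 + p.2) / n)) / (2 * ((p.1 + p.2) / n) - R))| with hF
  have hFmeas : Measurable F := by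
    apply Measurable.ennreal_ofReal
    apply Measurable.abs
    exact measurable_const.mul ((measurable_const.sub (by fun_prop)).div
      ((by fun_prop : Measurable fun p : ℝ × ℝ => 2 * ((p.1 + p.2) / n)).sub measurable_const))
  -- step: pointwise identification
  have hkey : ∀ ω, ENNReal.ofReal |tildeL0 ω| = F (S ω, D i0 ω) := by
    intro ω
    have hsum : S ω + D i0 ω = ∑ i, D i ω := Finset.sum_erase_add _ _ (Finset.mem_univ i0)
    rw [htilde, hbarD, hF]
    simp only [hsum]
  -- independence
  have hIndep : IndepFun S (D i0) P := by
    have := hindep.indepFun_finset_sum_of_notMem hmeas (Finset.notMem_erase i0 Finset.univ)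
    have hfe : (∑ j ∈ t, D j) = S := by
      funext ω; simp [hS, Finset.sum_apply]
    rwa [← ht, hfe] at this
  have hmap : P.map (fun ω => (S ω, D i0 ω)) = (P.map S).prod (P.map (D i0)) :=
    (indepFun_iff_map_prod_eq_prod_map_map hSmeas.aemeasurable
      (hmeas i0).aemeasurable).1 hIndep
  -- the set B
  set B : Set ℝ := Icc (n * R / 2 - 3 * R / 4) (n * R / 2 - R / 4) with hB
  -- positivity of μS B
  have hμSB : P.map S B ≠ 0 := by
    rw [Measure.map_apply hSmeas measurableSet_Icc]
    set J : Set ℝ := Icc (R / 2 - R / (4 * n)) (R / 2 + R / (4 * n)) with hJ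
    have hsub : (⋂ j ∈ t, D j ⁻¹' J) ⊆ S ⁻¹' B := by
      intro ω hω
      simp only [mem_iInter] at hω
      have hcard : (t.card : ℝ) = (n : ℝ) - 1 := by
        rw [ht, Finset.card_erase_of_mem (Finset.mem_univ i0), Finset.card_univ,
          Fintype.card_fin]
        rw [Nat.cast_sub hn]
        simp
      have hlow : (t.card : ℝ) * (R / 2 - R / (4 * n)) ≤ S ω := by
        have h := Finset.card_nsmul_le_sum t (fun j => D j ω) (R / 2 - R / (4 * n))
          (fun j hj => (hω j hj).1)
        rw [nsmul_eq_mul] at h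
        exact h
      have hhigh : S ω ≤ (t.card : ℝ) * (R / 2 + R / (4 * n)) := by
        have h := Finset.sum_le_card_nsmul t (fun j => D j ω) (R / 2 + R / (4 * n))
          (fun j hj => (hω j hj).2)
        rw [nsmul_eq_mul] at h
        exact h
      rw [hcard] at hlow hhigh
      have h1 : ((n:ℝ) - 1) / n ≤ 1 := by
        rw [div_le_one hn']; linarith
      have h1' : 0 ≤ ((n:ℝ) - 1) / n := div_nonneg (by linarith) hn'.le
      have e1 : ((n:ℝ) - 1) * (R / 2 - R / (4 * n)) =
          (n:ℝ) * R / 2 - R / 2 - ((n:ℝ) - 1) / n * (R / 4) + R / (4 * n) - R / (4*n) := by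
        field_simp
        ring
      have e2 : ((n:ℝ) - 1) * (R / 2 + R / (4 * n)) =
          (n:ℝ) * R / 2 - R / 2 + ((n:ℝ) - 1) / n * (R / 4) := by
        field_simp
      have hm1 : ((n:ℝ) - 1) / n * (R / 4) ≤ 1 * (R / 4) :=
        mul_le_mul_of_nonneg_right h1 (by positivity)
      have hm2 : 0 ≤ ((n:ℝ) - 1) / n * (R / 4) := by positivity
      constructor
      · rw [e1] at hlow; linarith
      · rw [e2] at hhigh; linarith
    have hE : P (⋂ j ∈ t, D j ⁻¹' J) ≠ 0 := by
      rw [hindep.measure_inter_preimage_eq_mul t (fun i _ => measurableSet_Icc)]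
      have hpos : ∀ j ∈ t, 0 < P (D j ⁻¹' J) := by
        intro j _
        have hmapj : P (D j ⁻¹' J) = P.map (D j) J :=
          (Measure.map_apply (hmeas j) measurableSet_Icc).symm
        rw [hmapj, hlaw j, withDensity_apply _ measurableSet_Icc]
        have hlb : ∫⁻ x in J, ENNReal.ofReal (L0 / (L0 * R + π * R ^ 2)) ∂volume
            ≤ ∫⁻ x in J, fd x ∂volume := by
          apply setLIntegral_mono hfdmeas
          intro x hx
          have hδ : R / (4 * (n:ℝ)) ≤ R / 4 := by
            apply div_le_div_of_nonneg_left hR.le (by norm_num)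
            linarith
          have hx0 : 0 ≤ x := le_trans (by linarith [hx.1]) le_rfl
          have hxR : x ≤ R := by
            have := hx.2; linarith
          rw [hfd]
          simp only
          rw [Set.indicator_of_mem (show x ∈ Icc (0:ℝ) R from ⟨hx0, hxR⟩)]
          apply ENNReal.ofReal_le_ofReal
          gcongr
          nlinarith
        have hconst : ∫⁻ _ in J, ENNReal.ofReal (L0 / (L0 * R + π * R ^ 2)) ∂volume
            = ENNReal.ofReal (L0 / (L0 * R + π * R ^ 2)) * ENNReal.ofReal (R / (2 * n)) := by
          rw [setLIntegral_const, hJ, Real.volume_Icc]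
          congr 1
          congr 1
          field_simp
          ring
        have hcpos : 0 < ENNReal.ofReal (L0 / (L0 * R + π * R ^ 2))
            * ENNReal.ofReal (R / (2 * n)) := by
          apply ENNReal.mul_pos
          · simp [ENNReal.ofReal_pos]; positivity
          · simp [ENNReal.ofReal_pos]; positivity
        calc (0:ℝ≥0∞) < _ := hcpos
          _ = _ := hconst.symm
          _ ≤ _ := hlb
      have : 0 < ∏ j ∈ t, P (D j ⁻¹' J) :=
        pos_iff_ne_zero.mpr (Finset.prod_ne_zero_iff.mpr fun j hj => (hpos j hj).ne')
      exact this.ne'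
    exact fun h0 => hE (measure_mono_null hsub h0)
  -- main computation
  calc ∫⁻ ω, ENNReal.ofReal |tildeL0 ω| ∂P
      = ∫⁻ ω, F (S ω, D i0 ω) ∂P := by simp_rw [hkey]
    _ = ∫⁻ p, F p ∂(P.map (fun ω => (S ω, D i0 ω))) :=
        (lintegral_map hFmeas (hSmeas.prodMk (hmeas i0))).symm
    _ = ∫⁻ p, F p ∂((P.map S).prod (volume.withDensity fd)) := by rw [hmap, hlaw i0]
    _ = ∫⁻ s', ∫⁻ x, F (s', x) ∂(volume.withDensity fd) ∂(P.map S) :=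
        lintegral_prod F hFmeas.aemeasurable
    _ = ⊤ := by
      have hinner : ∀ s' ∈ B, ∫⁻ x, F (s', x) ∂(volume.withDensity fd) = ⊤ := by
        intro s' hs'
        have hg : Measurable fun x : ℝ => F (s', x) :=
          hFmeas.comp (measurable_const.prodMk measurable_id)
        rw [lintegral_withDensity_eq_lintegral_mul volume hfdmeas hg]
        simp only [Pi.mul_apply]
        exact inner_top hR hL0 hn (by simpa [hB] using (by linarith [hs'.2] : R / 4 ≤ n * R / 2 - s'))
          (by linarith [hs'.1])
      refine top_le_iff.mp ?_
      calc (⊤:ℝ≥0∞) = ⊤ * P.map S B := (ENNReal.top_mul hμSB).symm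
        _ = ∫⁻ _ in B, (⊤:ℝ≥0∞) ∂(P.map S) := (setLIntegral_const B ⊤).symm
        _ ≤ ∫⁻ s' in B, (∫⁻ x, F (s', x) ∂(volume.withDensity fd)) ∂(P.map S) := by
            apply setLIntegral_mono' measurableSet_Icc
            intro s' hs'
            rw [hinner s' hs']
        _ ≤ _ := setLIntegral_le_lintegral _ _
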